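/- arXiv:1304.4305 — 2 statements merged into one kernel-verified Lean document; each statement's English description precedes it below -/
import Mathlib

section
/- Let k ≥ 0, m = 2k+1, and let g_{-k}, …, g_k be the zeros of the Legendre polynomial L_{2k+1}, which are 2k+1 distinct points of (−1,1) indexed so that g_{-i} = −g_i (hence g_0 = 0). Let G := {(1,g_i), (−1,g_i), (g_i,1), (g_i,−1) : i = −k, …, k} and let I be a finite subset of the open square (−1,1)² such that the only polynomial of total degree ≤ 2k−3 vanishing at every point of I is the zero polynomial. If v ∈ ER_m(K̂) vanishes at every point of G ∪ I, then v is the zero polynomial. -/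
/-- The Legendre polynomial of degree `n`, via Rodrigues' formula. -/
noncomputable def legendreP (n : ℕ) : Polynomial ℝ :=
  (((2 : ℝ) ^ n * (Nat.factorial n))⁻¹) •
    Polynomial.derivative^[n] ((Polynomial.X ^ 2 - 1) ^ n)



open Polynomial in
noncomputable def trX (a : ℝ) : MvPolynomial (Fin 2) ℝ →ₐ[ℝ] Polynomial ℝ :=
  MvPolynomial.aeval ![Polynomial.C a, Polynomial.X]

open Polynomial in
noncomputable def trY (a : ℝ) : MvPolynomial (Fin 2) ℝ →ₐ[ℝ] Polynomial ℝ :=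
  MvPolynomial.aeval ![Polynomial.X, Polynomial.C a]

lemma trX_eval (a y : ℝ) (w : MvPolynomial (Fin 2) ℝ) :
    (trX a w).eval y = MvPolynomial.eval ![a, y] w := by
  induction w using MvPolynomial.induction_on with
  | C c => simp [trX]
  | add u w hu hw => simp [map_add, hu, hw]
  | mul_X u i hu =>
    fin_cases i <;> simp [trX, map_mul, hu] <;> simp [← trX.eq_def, hu]

lemma trY_eval (a x : ℝ) (w : MvPolynomial (Fin 2) ℝ) :
    (trY a w).eval x = MvPolynomial.eval ![x, a] w := by
  induction w using MvPolynomial.induction_on with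
  | C c => simp [trY]
  | add u w hu hw => simp [map_add, hu, hw]
  | mul_X u i hu =>
    fin_cases i <;> simp [trY, map_mul, hu] <;> simp [← trY.eq_def, hu]


lemma degsum (d : Fin 2 →₀ ℕ) : (d.sum fun _ e => e) = d 0 + d 1 := by
  rw [Finsupp.sum_fintype _ _ (fun _ => rfl), Fin.sum_univ_two]

lemma trX_monomial (a : ℝ) (d : Fin 2 →₀ ℕ) (c : ℝ) :
    trX a (MvPolynomial.monomial d c) =
      Polynomial.C (c * a ^ (d 0)) * Polynomial.X ^ (d 1) := by
  rw [trX, MvPolynomial.aeval_monomial,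
    Finsupp.prod_fintype _ _ (fun _ => pow_zero _), Fin.prod_univ_two]
  rw [Polynomial.algebraMap_eq, Matrix.cons_val_zero, Matrix.cons_val_one, Matrix.cons_val_zero,
    ← Polynomial.C_pow, Polynomial.C_mul]
  ring

lemma trX_natDegree_le (a : ℝ) (w : MvPolynomial (Fin 2) ℝ) :
    (trX a w).natDegree ≤ w.totalDegree := by
  conv_lhs => rw [w.as_sum]
  rw [map_sum]
  apply Polynomial.natDegree_sum_le_of_forall_le
  intro d hd
  rw [trX_monomial]
  refine (Polynomial.natDegree_C_mul_le _ _).trans ?_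
  rw [Polynomial.natDegree_X_pow]
  calc d 1 ≤ d 0 + d 1 := le_add_self
  _ = d.sum fun _ e => e := (degsum d).symm
  _ ≤ w.totalDegree := MvPolynomial.le_totalDegree hd

lemma trX_coeff_top (a : ℝ) (w : MvPolynomial (Fin 2) ℝ) (n : ℕ)
    (h : w.totalDegree ≤ n) :
    (trX a w).coeff n = MvPolynomial.coeff (Finsupp.single 1 n) w := by
  conv_lhs => rw [w.as_sum]
  rw [map_sum, Polynomial.finset_sum_coeff]
  have key : ∀ d ∈ w.support,
      (trX a (MvPolynomial.monomial d (MvPolynomial.coeff d w))).coeff n =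
      if d = Finsupp.single 1 n then MvPolynomial.coeff d w else 0 := by
    intro d hd
    rw [trX_monomial, Polynomial.coeff_C_mul, Polynomial.coeff_X_pow]
    by_cases h1 : d 1 = n
    · have hle : d 0 + d 1 ≤ n := by
        rw [← degsum d]; exact (MvPolynomial.le_totalDegree hd).trans h
      have h0 : d 0 = 0 := by omega
      have hds : d = Finsupp.single 1 n := by
        ext i; fin_cases i
        · simp [h0, Finsupp.single_apply]
        · simp [h1, Finsupp.single_apply]
      simp [hds, h0, h1]
    · have hne : d ≠ Finsupp.single 1 n := by
        intro he; apply h1; rw [he]; simp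
      simp [hne, Ne.symm h1]
  rw [Finset.sum_congr rfl key, Finset.sum_ite_eq' w.support]
  by_cases hmem : Finsupp.single 1 n ∈ w.support
  · simp [hmem]
  · simp [hmem, MvPolynomial.notMem_support_iff.mp hmem]


lemma degsum' (d : Fin 2 →₀ ℕ) : (d.sum fun _ e => e) = d 0 + d 1 := by
  rw [Finsupp.sum_fintype _ _ (fun _ => rfl), Fin.sum_univ_two]

lemma trY_monomial (a : ℝ) (d : Fin 2 →₀ ℕ) (c : ℝ) :
    trY a (MvPolynomial.monomial d c) =
      Polynomial.C (c * a ^ (d 1)) * Polynomial.X ^ (d 0) := by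
  rw [trY, MvPolynomial.aeval_monomial,
    Finsupp.prod_fintype _ _ (fun _ => pow_zero _), Fin.prod_univ_two]
  rw [Polynomial.algebraMap_eq, Matrix.cons_val_zero, Matrix.cons_val_one, Matrix.cons_val_zero,
    ← Polynomial.C_pow, Polynomial.C_mul]
  ring

lemma trY_natDegree_le (a : ℝ) (w : MvPolynomial (Fin 2) ℝ) :
    (trY a w).natDegree ≤ w.totalDegree := by
  conv_lhs => rw [w.as_sum]
  rw [map_sum]
  apply Polynomial.natDegree_sum_le_of_forall_le
  intro d hd
  rw [trY_monomial]
  refine (Polynomial.natDegree_C_mul_le _ _).trans ?_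
  rw [Polynomial.natDegree_X_pow]
  calc d 0 ≤ d 0 + d 1 := Nat.le_add_right _ _
  _ = d.sum fun _ e => e := (degsum' d).symm
  _ ≤ w.totalDegree := MvPolynomial.le_totalDegree hd

lemma trY_coeff_top (a : ℝ) (w : MvPolynomial (Fin 2) ℝ) (n : ℕ)
    (h : w.totalDegree ≤ n) :
    (trY a w).coeff n = MvPolynomial.coeff (Finsupp.single 0 n) w := by
  conv_lhs => rw [w.as_sum]
  rw [map_sum, Polynomial.finset_sum_coeff]
  have key : ∀ d ∈ w.support,
      (trY a (MvPolynomial.monomial d (MvPolynomial.coeff d w))).coeff n =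
      if d = Finsupp.single 0 n then MvPolynomial.coeff d w else 0 := by
    intro d hd
    rw [trY_monomial, Polynomial.coeff_C_mul, Polynomial.coeff_X_pow]
    by_cases h0 : d 0 = n
    · have hle : d 0 + d 1 ≤ n := by
        rw [← degsum' d]; exact (MvPolynomial.le_totalDegree hd).trans h
      have h1 : d 1 = 0 := by omega
      have hds : d = Finsupp.single 0 n := by
        ext i; fin_cases i
        · simp [h0, Finsupp.single_apply]
        · simp [h1, Finsupp.single_apply]
      simp [hds, h0, h1]
    · have hne : d ≠ Finsupp.single 0 n := by
        intro he; apply h0; rw [he]; simp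
      simp [hne, Ne.symm h0]
  rw [Finset.sum_congr rfl key, Finset.sum_ite_eq' w.support]
  by_cases hmem : Finsupp.single 0 n ∈ w.support
  · simp [hmem]
  · simp [hmem, MvPolynomial.notMem_support_iff.mp hmem]


open Polynomial

lemma root_factor (Z : Finset ℝ) (t : Polynomial ℝ) (hd : t.natDegree ≤ Z.card + 1)
    (hr : ∀ x ∈ Z, t.eval x = 0) :
    ∃ a b : ℝ, t = (∏ x ∈ Z, (X - C x)) * (C a + C b * X) := by
  by_cases ht : t = 0
  · exact ⟨0, 0, by simp [ht]⟩
  have hdvd : (∏ x ∈ Z, (X - C x)) ∣ t := by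
    have hle : Z.val ≤ t.roots := by
      rw [Multiset.le_iff_subset Z.nodup]
      intro x hx
      rw [mem_roots ht]
      exact hr x hx
    have := (Multiset.prod_X_sub_C_dvd_iff_le_roots ht Z.val).mpr hle
    rwa [Finset.prod_eq_multiset_prod]
  obtain ⟨r, hrfac⟩ := hdvd
  have hQd : (∏ x ∈ Z, (X - C x)).natDegree = Z.card := by
    rw [Polynomial.natDegree_prod _ _ (fun x _ => X_sub_C_ne_zero x)]
    simp
  have hrne : r ≠ 0 := by rintro rfl; simp [hrfac] at ht
  have hQne : (∏ x ∈ Z, (X - C x)) ≠ 0 := by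
    intro h; rw [h, zero_mul] at hrfac; exact ht hrfac
  have hdeg : r.natDegree ≤ 1 := by
    have := Polynomial.natDegree_mul hQne hrne
    rw [← hrfac, hQd] at this
    omega
  refine ⟨r.coeff 0, r.coeff 1, ?_⟩
  rw [hrfac]
  conv_lhs => rw [eq_X_add_C_of_natDegree_le_one hdeg]
  ring

lemma prodQ_facts (Z : Finset ℝ) (n : ℕ) (hn : Z.card = n) :
    (∏ x ∈ Z, (X - C x)).coeff n = 1 ∧
    (∀ j, n < j → (∏ x ∈ Z, (X - C x)).coeff j = 0) := by
  have hm : (∏ x ∈ Z, (X - C x)).Monic :=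
    monic_prod_of_monic _ _ (fun x _ => monic_X_sub_C x)
  have hQd : (∏ x ∈ Z, (X - C x)).natDegree = n := by
    rw [Polynomial.natDegree_prod _ _ (fun x _ => X_sub_C_ne_zero x)]
    simp [hn]
  constructor
  · have := hm.leadingCoeff
    rwa [leadingCoeff, hQd] at this
  · intro j hj
    exact coeff_eq_zero_of_natDegree_lt (hQd ▸ hj)


lemma trX_zero_dvd (a : ℝ) (w : MvPolynomial (Fin 2) ℝ) (h : trX a w = 0) :
    ∃ w', w = (MvPolynomial.X 0 - MvPolynomial.C a) * w' := by
  set e := MvPolynomial.finSuccEquiv ℝ 1 with he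
  set Ψ : MvPolynomial (Fin 1) ℝ →ₐ[ℝ] Polynomial ℝ :=
    MvPolynomial.aeval (fun _ => Polynomial.X) with hΨ
  set Φ : MvPolynomial (Fin 2) ℝ →ₐ[ℝ] MvPolynomial (Fin 1) ℝ :=
    ((Polynomial.aeval (MvPolynomial.C a : MvPolynomial (Fin 1) ℝ)).restrictScalars ℝ).comp
      e.toAlgHom with hΦ
  have hx1 : (MvPolynomial.finSuccEquiv ℝ 1) (MvPolynomial.X 1)
      = Polynomial.C (MvPolynomial.X 0) :=
    MvPolynomial.finSuccEquiv_X_succ (j := 0)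
  have hca : (MvPolynomial.finSuccEquiv ℝ 1) (MvPolynomial.C a)
      = Polynomial.C (MvPolynomial.C a) := by
    have := (MvPolynomial.finSuccEquiv ℝ 1).commutes a
    simpa [Polynomial.algebraMap_apply, MvPolynomial.algebraMap_eq] using this
  have hcomp : Ψ.comp Φ = trX a := by
    apply MvPolynomial.algHom_ext
    intro i
    fin_cases i
    · simp [hΨ, hΦ, he, trX, MvPolynomial.finSuccEquiv_X_zero]
    · simp [hΨ, hΦ, he, trX, hx1]
  have hleft : (Polynomial.aeval (MvPolynomial.X 0 : MvPolynomial (Fin 1) ℝ)).comp Ψ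
      = AlgHom.id ℝ _ := by
    apply MvPolynomial.algHom_ext
    intro i
    fin_cases i
    simp [hΨ]
  have hΦw : Φ w = 0 := by
    have h1 : Ψ (Φ w) = 0 := by
      rw [← AlgHom.comp_apply, hcomp, h]
    have := congrArg (Polynomial.aeval (MvPolynomial.X 0 : MvPolynomial (Fin 1) ℝ)) h1
    rwa [← AlgHom.comp_apply, hleft, AlgHom.id_apply, map_zero] at this
  have hroot : Polynomial.IsRoot (e w) (MvPolynomial.C a) := by
    show Polynomial.eval _ _ = 0
    rw [← Polynomial.coe_aeval_eq_eval]
    exact hΦw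
  obtain ⟨u, hu⟩ := (Polynomial.dvd_iff_isRoot).mpr hroot
  refine ⟨e.symm u, ?_⟩
  have hsx : e.symm (Polynomial.X - Polynomial.C (MvPolynomial.C a))
      = MvPolynomial.X 0 - MvPolynomial.C a := by
    rw [AlgEquiv.symm_apply_eq]
    rw [map_sub, MvPolynomial.finSuccEquiv_X_zero]
    rw [he, hca]
  calc w = e.symm (e w) := (e.symm_apply_apply w).symm
  _ = e.symm (Polynomial.X - Polynomial.C (MvPolynomial.C a)) * e.symm u := by
      rw [hu, map_mul]
  _ = _ := by rw [hsx]



lemma trY_zero_dvd (a : ℝ) (w : MvPolynomial (Fin 2) ℝ) (h : trY a w = 0) :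
    ∃ w', w = (MvPolynomial.X 1 - MvPolynomial.C a) * w' := by
  have hsw : trX a (MvPolynomial.rename (Equiv.swap (0 : Fin 2) 1) w) = trY a w := by
    rw [trX, MvPolynomial.aeval_rename]
    have : (![Polynomial.C a, Polynomial.X] ∘ (Equiv.swap (0 : Fin 2) 1))
        = ![Polynomial.X, Polynomial.C a] := by
      funext i
      fin_cases i <;> simp [Equiv.swap_apply_of_ne_of_ne]
    rw [this, trY]
  obtain ⟨w', hw'⟩ := trX_zero_dvd a _ (hsw.trans h)
  refine ⟨MvPolynomial.rename (Equiv.swap (0 : Fin 2) 1) w', ?_⟩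
  have hid : ∀ u : MvPolynomial (Fin 2) ℝ,
      MvPolynomial.rename (Equiv.swap (0 : Fin 2) 1)
        (MvPolynomial.rename (Equiv.swap (0 : Fin 2) 1) u) = u := by
    intro u
    rw [MvPolynomial.rename_rename]
    have : ((Equiv.swap (0 : Fin 2) 1) ∘ (Equiv.swap (0 : Fin 2) 1)) = id := by
      funext x; simp
    rw [this, MvPolynomial.rename_id, AlgHom.id_apply]
  have := congrArg (MvPolynomial.rename (Equiv.swap (0 : Fin 2) 1)) hw'
  rw [hid, map_mul, map_sub, MvPolynomial.rename_X, MvPolynomial.rename_C] at this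
  simpa using this



lemma support_bound (p q : MvPolynomial (Fin 2) ℝ)
    (hfac : p = ((MvPolynomial.X 0 : MvPolynomial (Fin 2) ℝ) ^ 2 - 1) *
      ((MvPolynomial.X 1 : MvPolynomial (Fin 2) ℝ) ^ 2 - 1) * q)
    (d : Fin 2 →₀ ℕ) (hd : d ∈ q.support) :
    d 0 + d 1 + 4 ≤ p.totalDegree := by
  classical
  have hqne : q.support.Nonempty := ⟨d, hd⟩
  obtain ⟨dm, hdm, hsum⟩ :=
    Finset.exists_mem_eq_sup q.support hqne (fun s => s.sum fun _ e => e)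
  have hn : q.totalDegree = dm 0 + dm 1 := by
    rw [MvPolynomial.totalDegree, hsum, degsum]
  set s02 : Fin 2 →₀ ℕ := Finsupp.single 0 2 with hs02
  set s12 : Fin 2 →₀ ℕ := Finsupp.single 1 2 with hs12
  have hexp : p = MvPolynomial.monomial (s02 + s12) (1:ℝ) * q
      - MvPolynomial.monomial s02 (1:ℝ) * q - MvPolynomial.monomial s12 (1:ℝ) * q + q := by
    have hprod : MvPolynomial.monomial (s02 + s12) (1:ℝ)
        = MvPolynomial.monomial s02 1 * MvPolynomial.monomial s12 1 := by
      rw [MvPolynomial.monomial_mul]; norm_num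
    rw [hfac, hs02, hs12, hprod, ← MvPolynomial.X_pow_eq_monomial,
      ← MvPolynomial.X_pow_eq_monomial]
    ring
  have hout : ∀ e : Fin 2 →₀ ℕ, q.totalDegree < e 0 + e 1 → MvPolynomial.coeff e q = 0 := by
    intro e he
    by_contra hne
    have := MvPolynomial.le_totalDegree (MvPolynomial.mem_support_iff.mpr hne)
    rw [degsum] at this
    omega
  have hkey : MvPolynomial.coeff (dm + (s02 + s12)) p = MvPolynomial.coeff dm q := by
    rw [hexp]
    rw [MvPolynomial.coeff_add, MvPolynomial.coeff_sub, MvPolynomial.coeff_sub]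
    have h1 : MvPolynomial.coeff (dm + (s02 + s12))
        (MvPolynomial.monomial (s02 + s12) (1:ℝ) * q) = MvPolynomial.coeff dm q := by
      rw [add_comm dm (s02 + s12), MvPolynomial.coeff_monomial_mul, one_mul]
    have h2 : MvPolynomial.coeff (dm + (s02 + s12)) (MvPolynomial.monomial s02 (1:ℝ) * q)
        = 0 := by
      have hidx : dm + (s02 + s12) = s02 + (dm + s12) := by abel
      rw [hidx, MvPolynomial.coeff_monomial_mul, one_mul]
      apply hout
      simp [Finsupp.add_apply, hs12, Finsupp.single_apply, hn]
    have h3 : MvPolynomial.coeff (dm + (s02 + s12)) (MvPolynomial.monomial s12 (1:ℝ) * q)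
        = 0 := by
      have hidx : dm + (s02 + s12) = s12 + (dm + s02) := by abel
      rw [hidx, MvPolynomial.coeff_monomial_mul, one_mul]
      apply hout
      simp [Finsupp.add_apply, hs02, Finsupp.single_apply, hn]
    have h4 : MvPolynomial.coeff (dm + (s02 + s12)) q = 0 := by
      apply hout
      simp [Finsupp.add_apply, hs02, hs12, Finsupp.single_apply, hn]
      omega
    rw [h1, h2, h3, h4]
    ring
  have hmem : (dm + (s02 + s12)) ∈ p.support := by
    rw [MvPolynomial.mem_support_iff, hkey]
    exact MvPolynomial.mem_support_iff.mp hdm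
  have hle := MvPolynomial.le_totalDegree hmem
  rw [degsum] at hle
  have hdle : d 0 + d 1 ≤ q.totalDegree := by
    have := MvPolynomial.le_totalDegree hd
    rwa [degsum] at this
  have : (dm + (s02 + s12)) 0 + (dm + (s02 + s12)) 1 = (dm 0 + dm 1) + 4 := by
    simp [Finsupp.add_apply, hs02, hs12, Finsupp.single_apply]
    omega
  omega

set_option maxHeartbeats 1600000 in
theorem stmt_4 (k : ℕ) (g : ℤ → ℝ)
    (hzero : ∀ i ∈ Finset.Icc (-(k : ℤ)) (k : ℤ),
      (legendreP (2 * k + 1)).eval (g i) = 0)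
    (hmem : ∀ i ∈ Finset.Icc (-(k : ℤ)) (k : ℤ), g i ∈ Set.Ioo (-1 : ℝ) 1)
    (hinj : Set.InjOn g (Finset.Icc (-(k : ℤ)) (k : ℤ)))
    (hsym : ∀ i ∈ Finset.Icc (-(k : ℤ)) (k : ℤ), g (-i) = -g i)
    (I : Finset (ℝ × ℝ))
    (hI : ∀ r ∈ I, r.1 ∈ Set.Ioo (-1 : ℝ) 1 ∧ r.2 ∈ Set.Ioo (-1 : ℝ) 1)
    (hunisolv : ∀ q : MvPolynomial (Fin 2) ℝ,
      (∀ d ∈ q.support, ((d 0 + d 1 : ℕ) : ℤ) ≤ 2 * (k : ℤ) - 3) →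
      (∀ r ∈ I, MvPolynomial.eval ![r.1, r.2] q = 0) → q = 0)
    -- v ∈ ER_m(K̂) with m = 2k+1
    (v p : MvPolynomial (Fin 2) ℝ) (c₃ c₄ : ℝ)
    (hp : p.totalDegree ≤ 2 * k + 1)
    (hv : v = p + MvPolynomial.C c₃ *
        (MvPolynomial.X 0 ^ (2 * k + 1) * MvPolynomial.X 1 -
          MvPolynomial.X 0 * MvPolynomial.X 1 ^ (2 * k + 1)) +
      MvPolynomial.C c₄ *
        (MvPolynomial.X 0 ^ (2 * k + 2) - MvPolynomial.X 1 ^ (2 * k + 2)))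
    -- v vanishes at every point of G
    (hG : ∀ i ∈ Finset.Icc (-(k : ℤ)) (k : ℤ),
      MvPolynomial.eval ![1, g i] v = 0 ∧ MvPolynomial.eval ![-1, g i] v = 0 ∧
      MvPolynomial.eval ![g i, 1] v = 0 ∧ MvPolynomial.eval ![g i, -1] v = 0)
    -- v vanishes at every point of I
    (hIv : ∀ r ∈ I, MvPolynomial.eval ![r.1, r.2] v = 0) :
    v = 0 := by
  classical
  set S : Finset ℤ := Finset.Icc (-(k : ℤ)) (k : ℤ) with hS
  set Z : Finset ℝ := S.image g with hZ
  set Q : Polynomial ℝ := ∏ x ∈ Z, (Polynomial.X - Polynomial.C x) with hQdef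
  have hScard : S.card = 2 * k + 1 := by
    rw [hS, Int.card_Icc]
    omega
  have hZcard : Z.card = 2 * k + 1 := by
    rw [hZ, Finset.card_image_of_injOn hinj, hScard]
  obtain ⟨hQtop, hQhi⟩ := prodQ_facts Z (2 * k + 1) hZcard
  rw [← hQdef] at hQtop hQhi
  -- negation stability of S
  have hSneg : S.image (fun i => -i) = S := by
    ext j
    simp only [Finset.mem_image, Finset.mem_Icc, hS]
    constructor
    · rintro ⟨i, hi, rfl⟩; omega
    · intro hj; exact ⟨-j, by omega, by omega⟩
  -- sum of roots is zero
  have hgsum : ∑ i ∈ S, g i = 0 := by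
    have h1 : ∑ i ∈ S, g i = ∑ i ∈ S, g (-i) := by
      conv_lhs => rw [← hSneg]
      rw [Finset.sum_image (by intro a _ b _ h; simp only [neg_inj] at h; omega)]
    have h2 : ∑ i ∈ S, g (-i) = -∑ i ∈ S, g i := by
      rw [Finset.sum_congr rfl hsym]
      simp
    linarith [h1, h2]
  -- coeff of Q at 2k
  have hQnd : Q.natDegree = 2 * k + 1 := by
    rw [hQdef, Polynomial.natDegree_prod _ _ (fun x _ => Polynomial.X_sub_C_ne_zero x)]
    simp [hZcard]
  have hQ2k : Q.coeff (2 * k) = 0 := by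
    have hmon : ∀ x ∈ Z, (Polynomial.X - Polynomial.C x).Monic :=
      fun x _ => Polynomial.monic_X_sub_C x
    have hnext := Polynomial.Monic.nextCoeff_prod Z _ hmon
    have hpos : 0 < Q.natDegree := by omega
    rw [Polynomial.nextCoeff_of_natDegree_pos hpos] at hnext
    rw [hQnd] at hnext
    simp only [Polynomial.nextCoeff_X_sub_C] at hnext
    have hzsum : ∑ x ∈ Z, x = 0 := by
      rw [hZ, Finset.sum_image (fun a ha b hb h => hinj ha hb h)]
      exact hgsum
    have : (2 * k + 1 - 1) = 2 * k := by omega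
    rw [this] at hnext
    rw [hnext, Finset.sum_neg_distrib, hzsum, neg_zero]
  -- evaluations of Q at ±1
  have hQe1 : Q.eval 1 = ∏ i ∈ S, (1 - g i) := by
    rw [hQdef, Polynomial.eval_prod]
    simp only [Polynomial.eval_sub, Polynomial.eval_X, Polynomial.eval_C]
    rw [hZ, Finset.prod_image (fun a ha b hb h => hinj ha hb h)]
  have hQpos : 0 < Q.eval 1 := by
    rw [hQe1]
    exact Finset.prod_pos (fun i hi => by have := (hmem i hi).2; linarith)
  have hQem1 : Q.eval (-1) = -Q.eval 1 := by
    have hL : Q.eval (-1) = ∏ i ∈ S, (-1 - g i) := by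
      rw [hQdef, Polynomial.eval_prod]
      simp only [Polynomial.eval_sub, Polynomial.eval_X, Polynomial.eval_C]
      rw [hZ, Finset.prod_image (fun a ha b hb h => hinj ha hb h)]
    have h1 : ∏ i ∈ S, (-1 - g i) = ∏ i ∈ S, ((-1 : ℝ) * (1 + g i)) :=
      Finset.prod_congr rfl (fun i _ => by ring)
    have h2 : ∏ i ∈ S, ((-1:ℝ) * (1 + g i)) = (-1) ^ S.card * ∏ i ∈ S, (1 + g i) := by
      rw [Finset.prod_mul_distrib, Finset.prod_const]
    have hprodsym : ∏ i ∈ S, (1 + g i) = ∏ i ∈ S, (1 - g i) := by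
      conv_lhs => rw [← hSneg]
      rw [Finset.prod_image (by intro a _ b _ h; simp only [neg_inj] at h; omega)]
      exact Finset.prod_congr rfl (fun i hi => by rw [hsym i hi]; ring)
    have hodd : (-1 : ℝ) ^ S.card = -1 := by
      rw [hScard]; exact Odd.neg_one_pow ⟨k, by ring⟩
    rw [hL, h1, h2, hodd, hprodsym, hQe1]
    ring

  -- total degree of v
  have htdv : v.totalDegree ≤ 2 * k + 2 := by
    rw [hv]
    refine (MvPolynomial.totalDegree_add _ _).trans (max_le
      ((MvPolynomial.totalDegree_add _ _).trans (max_le (hp.trans (by omega)) ?_)) ?_)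
    · refine (MvPolynomial.totalDegree_mul _ _).trans ?_
      rw [MvPolynomial.totalDegree_C, zero_add]
      refine (MvPolynomial.totalDegree_sub _ _).trans (max_le ?_ ?_)
      · refine (MvPolynomial.totalDegree_mul _ _).trans ?_
        rw [MvPolynomial.totalDegree_X_pow, MvPolynomial.totalDegree_X]
      · refine (MvPolynomial.totalDegree_mul _ _).trans ?_
        rw [MvPolynomial.totalDegree_X_pow, MvPolynomial.totalDegree_X]
        omega
    · refine (MvPolynomial.totalDegree_mul _ _).trans ?_
      rw [MvPolynomial.totalDegree_C, zero_add]
      refine (MvPolynomial.totalDegree_sub _ _).trans (max_le ?_ ?_) <;>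
        rw [MvPolynomial.totalDegree_X_pow]
  -- factorization of the four traces
  have hfactor : ∀ t : Polynomial ℝ, t.natDegree ≤ 2 * k + 2 →
      (∀ i ∈ S, t.eval (g i) = 0) →
      ∃ a b : ℝ, t = Q * (Polynomial.C a + Polynomial.C b * Polynomial.X) := by
    intro t hd hr
    obtain ⟨a, b, hab⟩ := root_factor Z t (by rw [hZcard]; omega)
      (fun x hx => by
        obtain ⟨i, hi, rfl⟩ := Finset.mem_image.mp hx
        exact hr i hi)
    exact ⟨a, b, by rw [hab, hQdef]⟩
  obtain ⟨a₁, b₁, hf1⟩ := hfactor (trX 1 v) ((trX_natDegree_le _ _).trans htdv)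
    (fun i hi => by rw [trX_eval]; exact (hG i hi).1)
  obtain ⟨a₂, b₂, hf2⟩ := hfactor (trX (-1) v) ((trX_natDegree_le _ _).trans htdv)
    (fun i hi => by rw [trX_eval]; exact (hG i hi).2.1)
  obtain ⟨a₃, b₃, hf3⟩ := hfactor (trY 1 v) ((trY_natDegree_le _ _).trans htdv)
    (fun i hi => by rw [trY_eval]; exact (hG i hi).2.2.1)
  obtain ⟨a₄, b₄, hf4⟩ := hfactor (trY (-1) v) ((trY_natDegree_le _ _).trans htdv)
    (fun i hi => by rw [trY_eval]; exact (hG i hi).2.2.2)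
  -- coefficients of Q-factored polynomials
  have hcoefftop : ∀ a b : ℝ,
      (Q * (Polynomial.C a + Polynomial.C b * Polynomial.X)).coeff (2 * k + 2) = b := by
    intro a b
    have hexp : Q * (Polynomial.C a + Polynomial.C b * Polynomial.X)
        = Polynomial.C a * Q + Polynomial.C b * (Q * Polynomial.X) := by ring
    rw [hexp, Polynomial.coeff_add, Polynomial.coeff_C_mul, Polynomial.coeff_C_mul]
    have h1 : Q.coeff (2 * k + 2) = 0 := hQhi _ (by omega)
    have h2 : (Q * Polynomial.X).coeff (2 * k + 2) = Q.coeff (2 * k + 1) := by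
      have hi : 2 * k + 2 = (2 * k + 1) + 1 := by omega
      rw [hi, Polynomial.coeff_mul_X]
    rw [h1, h2, hQtop]
    ring
  have hcoeffsub : ∀ a b : ℝ,
      (Q * (Polynomial.C a + Polynomial.C b * Polynomial.X)).coeff (2 * k + 1) = a := by
    intro a b
    have hexp : Q * (Polynomial.C a + Polynomial.C b * Polynomial.X)
        = Polynomial.C a * Q + Polynomial.C b * (Q * Polynomial.X) := by ring
    rw [hexp, Polynomial.coeff_add, Polynomial.coeff_C_mul, Polynomial.coeff_C_mul]
    have h2 : (Q * Polynomial.X).coeff (2 * k + 1) = Q.coeff (2 * k) :=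
      Polynomial.coeff_mul_X _ _
    rw [h2, hQtop, hQ2k]
    ring
  have hevalf : ∀ (a b y : ℝ),
      (Q * (Polynomial.C a + Polynomial.C b * Polynomial.X)).eval y
        = Q.eval y * (a + b * y) := by
    intro a b y
    simp [Polynomial.eval_mul, Polynomial.eval_add, Polynomial.eval_C, Polynomial.eval_X]
  -- normal forms of the traces
  have hCm1 : (Polynomial.C (-1 : ℝ)) = -1 := by simp
  have hOp : (-1 : Polynomial ℝ) ^ (2 * k + 1) = -1 := Odd.neg_one_pow ⟨k, by ring⟩
  have hEp : (-1 : Polynomial ℝ) ^ (2 * k + 2) = 1 := Even.neg_one_pow ⟨k + 1, by ring⟩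
  have hT1 : trX 1 v = trX 1 p
      + (Polynomial.C c₃ * (Polynomial.X - Polynomial.X ^ (2 * k + 1))
        + Polynomial.C c₄ * (1 - Polynomial.X ^ (2 * k + 2))) := by
    rw [hv]
    simp only [map_add, map_mul, map_sub, map_pow, trX, MvPolynomial.aeval_X,
      MvPolynomial.aeval_C, Matrix.cons_val_zero, Matrix.cons_val_one, Matrix.head_cons,
      Polynomial.algebraMap_eq, Polynomial.C_1, one_pow, one_mul, hCm1, hOp, hEp]
    ring
  have hT2 : trX (-1) v = trX (-1) p
      + (Polynomial.C c₃ * (Polynomial.X ^ (2 * k + 1) - Polynomial.X)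
        + Polynomial.C c₄ * (1 - Polynomial.X ^ (2 * k + 2))) := by
    rw [hv]
    simp only [map_add, map_mul, map_sub, map_pow, trX, MvPolynomial.aeval_X,
      MvPolynomial.aeval_C, Matrix.cons_val_zero, Matrix.cons_val_one, Matrix.head_cons,
      Polynomial.algebraMap_eq, Polynomial.C_1, one_pow, one_mul, hCm1, hOp, hEp]
    ring
  have hT3 : trY 1 v = trY 1 p
      + (Polynomial.C c₃ * (Polynomial.X ^ (2 * k + 1) - Polynomial.X)
        + Polynomial.C c₄ * (Polynomial.X ^ (2 * k + 2) - 1)) := by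
    rw [hv]
    simp only [map_add, map_mul, map_sub, map_pow, trY, MvPolynomial.aeval_X,
      MvPolynomial.aeval_C, Matrix.cons_val_zero, Matrix.cons_val_one, Matrix.head_cons,
      Polynomial.algebraMap_eq, Polynomial.C_1, one_pow, one_mul, hCm1, hOp, hEp]
    ring
  have hT4 : trY (-1) v = trY (-1) p
      + (Polynomial.C c₃ * (Polynomial.X - Polynomial.X ^ (2 * k + 1))
        + Polynomial.C c₄ * (Polynomial.X ^ (2 * k + 2) - 1)) := by
    rw [hv]
    simp only [map_add, map_mul, map_sub, map_pow, trY, MvPolynomial.aeval_X,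
      MvPolynomial.aeval_C, Matrix.cons_val_zero, Matrix.cons_val_one, Matrix.head_cons,
      Polynomial.algebraMap_eq, Polynomial.C_1, one_pow, one_mul, hCm1, hOp, hEp]
    ring

  -- coefficient extraction
  set α := MvPolynomial.coeff (Finsupp.single 1 (2 * k + 1)) p with hαdef
  set β := MvPolynomial.coeff (Finsupp.single 0 (2 * k + 1)) p with hβdef
  set χ : ℝ := if 2 * k + 1 = 1 then 1 else 0 with hχdef
  have hptrX : ∀ a : ℝ, (trX a p).coeff (2 * k + 1) = α := fun a => trX_coeff_top a p _ hp
  have hptrY : ∀ a : ℝ, (trY a p).coeff (2 * k + 1) = β := fun a => trY_coeff_top a p _ hp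
  have hhiX : ∀ a : ℝ, (trX a p).coeff (2 * k + 2) = 0 := fun a =>
    Polynomial.coeff_eq_zero_of_natDegree_lt
      (lt_of_le_of_lt ((trX_natDegree_le a p).trans hp) (by omega))
  have hhiY : ∀ a : ℝ, (trY a p).coeff (2 * k + 2) = 0 := fun a =>
    Polynomial.coeff_eq_zero_of_natDegree_lt
      (lt_of_le_of_lt ((trY_natDegree_le a p).trans hp) (by omega))
  have hXc : (Polynomial.X : Polynomial ℝ).coeff (2 * k + 1) = χ := by
    by_cases h1 : 2 * k + 1 = 1
    · rw [hχdef, if_pos h1, h1, Polynomial.coeff_X_one]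
    · have h1' : ¬((2 * k + 1 : ℕ) = 1) := h1
      rw [hχdef, if_neg h1, Polynomial.coeff_X, if_neg (by omega)]
  have hXc2 : (Polynomial.X : Polynomial ℝ).coeff (2 * k + 2) = 0 := by
    rw [Polynomial.coeff_X, if_neg (by omega)]
  have hXX : ((Polynomial.X : Polynomial ℝ) ^ (2 * k + 1)).coeff (2 * k + 1) = 1 := by
    rw [Polynomial.coeff_X_pow, if_pos rfl]
  have hXX2 : ((Polynomial.X : Polynomial ℝ) ^ (2 * k + 1)).coeff (2 * k + 2) = 0 := by
    rw [Polynomial.coeff_X_pow, if_neg (by omega)]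
  have hXXtop : ((Polynomial.X : Polynomial ℝ) ^ (2 * k + 2)).coeff (2 * k + 2) = 1 := by
    rw [Polynomial.coeff_X_pow, if_pos rfl]
  have hXXlow : ((Polynomial.X : Polynomial ℝ) ^ (2 * k + 2)).coeff (2 * k + 1) = 0 := by
    rw [Polynomial.coeff_X_pow, if_neg (by omega)]
  have hone1 : (1 : Polynomial ℝ).coeff (2 * k + 1) = 0 := by
    rw [Polynomial.coeff_one, if_neg (by omega)]
  have hone2 : (1 : Polynomial ℝ).coeff (2 * k + 2) = 0 := by
    rw [Polynomial.coeff_one, if_neg (by omega)]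
  -- b coefficients
  have hb1 : b₁ = -c₄ := by
    have h := hcoefftop a₁ b₁
    rw [← hf1, hT1, Polynomial.coeff_add, Polynomial.coeff_add, Polynomial.coeff_C_mul,
      Polynomial.coeff_C_mul, Polynomial.coeff_sub, Polynomial.coeff_sub, hhiX, hXc2, hXX2,
      hone2, hXXtop] at h
    linear_combination -h
  have hb2 : b₂ = -c₄ := by
    have h := hcoefftop a₂ b₂
    rw [← hf2, hT2, Polynomial.coeff_add, Polynomial.coeff_add, Polynomial.coeff_C_mul,
      Polynomial.coeff_C_mul, Polynomial.coeff_sub, Polynomial.coeff_sub, hhiX, hXc2, hXX2,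
      hone2, hXXtop] at h
    linear_combination -h
  have hb3 : b₃ = c₄ := by
    have h := hcoefftop a₃ b₃
    rw [← hf3, hT3, Polynomial.coeff_add, Polynomial.coeff_add, Polynomial.coeff_C_mul,
      Polynomial.coeff_C_mul, Polynomial.coeff_sub, Polynomial.coeff_sub, hhiY, hXc2, hXX2,
      hone2, hXXtop] at h
    linear_combination -h
  have hb4 : b₄ = c₄ := by
    have h := hcoefftop a₄ b₄
    rw [← hf4, hT4, Polynomial.coeff_add, Polynomial.coeff_add, Polynomial.coeff_C_mul,
      Polynomial.coeff_C_mul, Polynomial.coeff_sub, Polynomial.coeff_sub, hhiY, hXc2, hXX2,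
      hone2, hXXtop] at h
    linear_combination -h
  -- a coefficients
  have ha1 : a₁ = α + c₃ * (χ - 1) := by
    have h := hcoeffsub a₁ b₁
    rw [← hf1, hT1, Polynomial.coeff_add, Polynomial.coeff_add, Polynomial.coeff_C_mul,
      Polynomial.coeff_C_mul, Polynomial.coeff_sub, Polynomial.coeff_sub, hptrX, hXc, hXX,
      hone1, hXXlow] at h
    linear_combination -h
  have ha2 : a₂ = α - c₃ * (χ - 1) := by
    have h := hcoeffsub a₂ b₂
    rw [← hf2, hT2, Polynomial.coeff_add, Polynomial.coeff_add, Polynomial.coeff_C_mul,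
      Polynomial.coeff_C_mul, Polynomial.coeff_sub, Polynomial.coeff_sub, hptrX, hXc, hXX,
      hone1, hXXlow] at h
    linear_combination -h
  have ha3 : a₃ = β - c₃ * (χ - 1) := by
    have h := hcoeffsub a₃ b₃
    rw [← hf3, hT3, Polynomial.coeff_add, Polynomial.coeff_add, Polynomial.coeff_C_mul,
      Polynomial.coeff_C_mul, Polynomial.coeff_sub, Polynomial.coeff_sub, hptrY, hXc, hXX,
      hone1, hXXlow] at h
    linear_combination -h
  have ha4 : a₄ = β + c₃ * (χ - 1) := by
    have h := hcoeffsub a₄ b₄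
    rw [← hf4, hT4, Polynomial.coeff_add, Polynomial.coeff_add, Polynomial.coeff_C_mul,
      Polynomial.coeff_C_mul, Polynomial.coeff_sub, Polynomial.coeff_sub, hptrY, hXc, hXX,
      hone1, hXXlow] at h
    linear_combination -h
  -- corner equations
  have hc11 := (trX_eval 1 1 v).trans (trY_eval 1 1 v).symm
  rw [hf1, hf3, hevalf, hevalf] at hc11
  have hc1m := (trX_eval 1 (-1) v).trans (trY_eval (-1) 1 v).symm
  rw [hf1, hf4, hevalf, hevalf, hQem1] at hc1m
  have hcm1 := (trX_eval (-1) 1 v).trans (trY_eval 1 (-1) v).symm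
  rw [hf2, hf3, hevalf, hevalf, hQem1] at hcm1
  have hcmm := (trX_eval (-1) (-1) v).trans (trY_eval (-1) (-1) v).symm
  rw [hf2, hf4, hevalf, hevalf, hQem1] at hcmm
  have hsne : Q.eval 1 ≠ 0 := ne_of_gt hQpos
  have hE1 : a₁ + b₁ = a₃ + b₃ := by
    apply mul_left_cancel₀ hsne
    linear_combination hc11
  have hE2 : -(a₁ - b₁) = a₄ + b₄ := by
    apply mul_left_cancel₀ hsne
    linear_combination hc1m
  have hE3 : a₂ + b₂ = -(a₃ - b₃) := by
    apply mul_left_cancel₀ hsne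
    linear_combination hcm1
  have hE4 : -(a₂ - b₂) = -(a₄ - b₄) := by
    apply mul_left_cancel₀ hsne
    linear_combination hcmm
  -- solve the linear system
  have hc4 : c₄ = 0 := by linarith
  have hu0 : c₃ * (χ - 1) = 0 := by linarith
  have hα0 : α = 0 := by linarith
  have hβ0 : β = 0 := by linarith
  have ha1z : a₁ = 0 := by linarith
  have ha2z : a₂ = 0 := by linarith
  have ha3z : a₃ = 0 := by linarith
  have ha4z : a₄ = 0 := by linarith
  have hb1z : b₁ = 0 := by linarith
  have hb2z : b₂ = 0 := by linarith
  have hb3z : b₃ = 0 := by linarith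
  have hb4z : b₄ = 0 := by linarith
  have hT1z : trX 1 v = 0 := by rw [hf1, ha1z, hb1z]; simp
  have hT2z : trX (-1) v = 0 := by rw [hf2, ha2z, hb2z]; simp
  have hT3z : trY 1 v = 0 := by rw [hf3, ha3z, hb3z]; simp
  have hT4z : trY (-1) v = 0 := by rw [hf4, ha4z, hb4z]; simp
  -- v = p
  have hvp : v = p := by
    rw [hv]
    have hterm : MvPolynomial.C c₃ *
        ((MvPolynomial.X 0 : MvPolynomial (Fin 2) ℝ) ^ (2 * k + 1) * MvPolynomial.X 1 -
          MvPolynomial.X 0 * MvPolynomial.X 1 ^ (2 * k + 1)) = 0 := by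
      by_cases h1 : 2 * k + 1 = 1
      · rw [h1]
        simp
      · have hχ0 : χ = 0 := by rw [hχdef, if_neg h1]
        have hc30 : c₃ = 0 := by
          rw [hχ0] at hu0
          linarith
        simp [hc30]
    rw [hterm, hc4]
    simp

  -- traces of p vanish
  have hpt1 : trX 1 p = 0 := by rw [← hvp]; exact hT1z
  have hpt2 : trX (-1) p = 0 := by rw [← hvp]; exact hT2z
  have hpt3 : trY 1 p = 0 := by rw [← hvp]; exact hT3z
  have hpt4 : trY (-1) p = 0 := by rw [← hvp]; exact hT4z
  -- divide out the factors
  obtain ⟨p₁, hp1⟩ := trX_zero_dvd 1 p hpt1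
  have hCne : (Polynomial.C (-2) : Polynomial ℝ) ≠ 0 := by
    intro hcontra
    have := Polynomial.C_injective (R := ℝ) (hcontra.trans Polynomial.C_0.symm)
    norm_num at this
  have hne1 : (Polynomial.X - 1 : Polynomial ℝ) ≠ 0 := by
    have := Polynomial.X_sub_C_ne_zero (1 : ℝ)
    simpa using this
  have hne2 : (Polynomial.X + 1 : Polynomial ℝ) ≠ 0 := by
    have := Polynomial.X_sub_C_ne_zero (-1 : ℝ)
    simpa [sub_neg_eq_add] using this
  have htr2 : trX (-1) p₁ = 0 := by
    have h := hpt2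
    rw [hp1, map_mul] at h
    have hfac : trX (-1) ((MvPolynomial.X 0 : MvPolynomial (Fin 2) ℝ) - MvPolynomial.C 1)
        = Polynomial.C (-2) := by
      rw [map_sub, trX]
      simp only [MvPolynomial.aeval_X, MvPolynomial.aeval_C, Matrix.cons_val_zero,
        Polynomial.algebraMap_eq]
      rw [← Polynomial.C_sub]
      norm_num
    rw [hfac] at h
    rcases mul_eq_zero.mp h with h2 | h2
    · exact absurd h2 hCne
    · exact h2
  obtain ⟨p₂, hp2⟩ := trX_zero_dvd (-1) p₁ htr2
  have hfa1 : trY 1 ((MvPolynomial.X 0 : MvPolynomial (Fin 2) ℝ) - MvPolynomial.C 1)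
      = Polynomial.X - 1 := by
    rw [map_sub, trY]
    simp [Polynomial.algebraMap_eq]
  have hfb1 : trY 1 ((MvPolynomial.X 0 : MvPolynomial (Fin 2) ℝ) - MvPolynomial.C (-1))
      = Polynomial.X + 1 := by
    rw [map_sub, trY]
    simp [Polynomial.algebraMap_eq]
  have hfa2 : trY (-1) ((MvPolynomial.X 0 : MvPolynomial (Fin 2) ℝ) - MvPolynomial.C 1)
      = Polynomial.X - 1 := by
    rw [map_sub, trY]
    simp [Polynomial.algebraMap_eq]
  have hfb2 : trY (-1) ((MvPolynomial.X 0 : MvPolynomial (Fin 2) ℝ) - MvPolynomial.C (-1))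
      = Polynomial.X + 1 := by
    rw [map_sub, trY]
    simp [Polynomial.algebraMap_eq]
  have htr3 : trY 1 p₂ = 0 := by
    have h := hpt3
    rw [hp1, hp2, map_mul, map_mul, hfa1, hfb1] at h
    rcases mul_eq_zero.mp h with h2 | h2
    · exact absurd h2 hne1
    rcases mul_eq_zero.mp h2 with h3 | h3
    · exact absurd h3 hne2
    · exact h3
  obtain ⟨p₃, hp3⟩ := trY_zero_dvd 1 p₂ htr3
  have htr4 : trY (-1) p₃ = 0 := by
    have h := hpt4
    rw [hp1, hp2, hp3, map_mul, map_mul, map_mul, hfa2, hfb2] at h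
    have hfc : trY (-1) ((MvPolynomial.X 1 : MvPolynomial (Fin 2) ℝ) - MvPolynomial.C 1)
        = Polynomial.C (-2) := by
      rw [map_sub, trY]
      simp only [MvPolynomial.aeval_X, MvPolynomial.aeval_C, Matrix.cons_val_one,
        Matrix.head_cons, Matrix.cons_val_zero, Polynomial.algebraMap_eq]
      rw [← Polynomial.C_sub]
      norm_num
    rw [hfc] at h
    rcases mul_eq_zero.mp h with h2 | h2
    · exact absurd h2 hne1
    rcases mul_eq_zero.mp h2 with h3 | h3
    · exact absurd h3 hne2
    rcases mul_eq_zero.mp h3 with h4 | h4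
    · exact absurd h4 hCne
    · exact h4
  obtain ⟨q, hq⟩ := trY_zero_dvd (-1) p₃ htr4
  -- the factored form
  have hfacp : p = ((MvPolynomial.X 0 : MvPolynomial (Fin 2) ℝ) ^ 2 - 1) *
      ((MvPolynomial.X 1 : MvPolynomial (Fin 2) ℝ) ^ 2 - 1) * q := by
    rw [hp1, hp2, hp3, hq]
    have hCn : (MvPolynomial.C (-1 : ℝ) : MvPolynomial (Fin 2) ℝ) = -1 := by
      rw [map_neg, MvPolynomial.C_1]
    rw [hCn, MvPolynomial.C_1]
    ring
  -- q vanishes on I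
  have hqI : ∀ r ∈ I, MvPolynomial.eval ![r.1, r.2] q = 0 := by
    intro r hr
    have h := hIv r hr
    rw [hvp, hfacp] at h
    simp only [map_mul, map_sub, map_pow, map_one, MvPolynomial.eval_X,
      Matrix.cons_val_zero, Matrix.cons_val_one, Matrix.head_cons] at h
    obtain ⟨h1, h2⟩ := hI r hr
    have hz1 : r.1 ^ 2 - 1 ≠ 0 := by
      obtain ⟨hl, hu⟩ := h1
      have hfa : r.1 ^ 2 - 1 = (r.1 - 1) * (r.1 + 1) := by ring
      rw [hfa]
      exact mul_ne_zero (ne_of_lt (by linarith)) (ne_of_gt (by linarith))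
    have hz2 : r.2 ^ 2 - 1 ≠ 0 := by
      obtain ⟨hl, hu⟩ := h2
      have hfa : r.2 ^ 2 - 1 = (r.2 - 1) * (r.2 + 1) := by ring
      rw [hfa]
      exact mul_ne_zero (ne_of_lt (by linarith)) (ne_of_gt (by linarith))
    rcases mul_eq_zero.mp h with h3 | h3
    · rcases mul_eq_zero.mp h3 with h4 | h4
      · exact absurd h4 hz1
      · exact absurd h4 hz2
    · exact h3
  -- degree bound on q
  have hqdeg : ∀ d ∈ q.support, ((d 0 + d 1 : ℕ) : ℤ) ≤ 2 * (k : ℤ) - 3 := by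
    intro d hd
    have hb := support_bound p q hfacp d hd
    have hc : d 0 + d 1 + 4 ≤ 2 * k + 1 := le_trans hb hp
    push_cast
    omega
  have hq0 : q = 0 := hunisolv q hqdeg hqI
  rw [hvp, hfacp, hq0, mul_zero]
end

section
/- Let k ≥ 1, m = 2k, and let g_{-k}, …, g_{-1}, g_1, …, g_k be the zeros of the Legendre polynomial L_{2k}, which are 2k distinct nonzero points of (−1,1) indexed so that g_{-i} = −g_i. Let G⁺ := {(1,g_i), (−1,g_i), (g_i,1), (g_i,−1) : 1 ≤ |i| ≤ k} and let I⁺ be a finite subset of the open square (−1,1)² such that the only polynomial of total degree ≤ 2k−4 vanishing at every point of I⁺ is the zero polynomial. If v ∈ R_m^{+}(K̂) vanishes at every point of G⁺ ∪ I⁺ ∪ {(1,1)}, then v is the zero polynomial. -/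
open Polynomial

noncomputable def Phi : MvPolynomial (Fin 2) ℝ →ₐ[ℝ] Polynomial (Polynomial ℝ) :=
  MvPolynomial.aeval ![Polynomial.X, Polynomial.C Polynomial.X]

noncomputable def BB : Polynomial (Polynomial ℝ) →+* MvPolynomial (Fin 2) ℝ :=
  Polynomial.eval₂RingHom
    (Polynomial.eval₂RingHom (MvPolynomial.C) (MvPolynomial.X 1)) (MvPolynomial.X 0)

lemma BB_X : BB Polynomial.X = MvPolynomial.X 0 := by simp [BB]

lemma BB_C (q : Polynomial ℝ) :
    BB (Polynomial.C q) = Polynomial.eval₂ MvPolynomial.C (MvPolynomial.X 1) q := by simp [BB]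

lemma div2 {R : Type*} [CommRing R] [IsDomain R] {P : Polynomial R} {a b : R} (hab : a ≠ b)
    (ha : P.eval a = 0) (hb : P.eval b = 0) : (X - C a) * (X - C b) ∣ P := by
  obtain ⟨Q1, hQ1⟩ := dvd_iff_isRoot.mpr ha
  have h2 : Q1.eval b = 0 := by
    have hb' := hb
    rw [hQ1] at hb'
    simp only [eval_mul, eval_sub, eval_X, eval_C, mul_eq_zero, sub_eq_zero] at hb'
    rcases hb' with h | h
    · exact absurd h.symm hab
    · exact h
  obtain ⟨Q, hQ⟩ := dvd_iff_isRoot.mpr h2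
  exact ⟨Q, by rw [hQ1, hQ]; ring⟩

lemma aux_comp (w : MvPolynomial (Fin 2) ℝ) : BB (Phi w) = w := by
  have h : BB.comp (Phi.toRingHom) = RingHom.id _ := by
    apply MvPolynomial.ringHom_ext
    · intro r; simp [BB, Phi]
    · intro i; fin_cases i <;> simp [BB, Phi]
  exact RingHom.congr_fun h w

lemma aux_evalC (a : ℝ) (w : MvPolynomial (Fin 2) ℝ) :
    (Phi w).eval (Polynomial.C a)
      = MvPolynomial.aeval ![Polynomial.C a, Polynomial.X] w := by
  have h : (Polynomial.evalRingHom (Polynomial.C a)).comp Phi.toRingHom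
      = (MvPolynomial.aeval ![Polynomial.C a, Polynomial.X] :
          MvPolynomial (Fin 2) ℝ →ₐ[ℝ] Polynomial ℝ).toRingHom := by
    apply MvPolynomial.ringHom_ext
    · intro r; simp [Phi]
    · intro i; fin_cases i <;> simp [Phi]
  exact RingHom.congr_fun h w

lemma aux_map (b : ℝ) (w : MvPolynomial (Fin 2) ℝ) :
    (Phi w).map (Polynomial.evalRingHom b)
      = MvPolynomial.aeval ![Polynomial.X, Polynomial.C b] w := by
  have h : (Polynomial.mapRingHom (Polynomial.evalRingHom b)).comp Phi.toRingHom
      = (MvPolynomial.aeval ![Polynomial.X, Polynomial.C b] :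
          MvPolynomial (Fin 2) ℝ →ₐ[ℝ] Polynomial ℝ).toRingHom := by
    apply MvPolynomial.ringHom_ext
    · intro r; simp [Phi]
    · intro i; fin_cases i <;> simp [Phi]
  exact RingHom.congr_fun h w

lemma aux_eval (s : Fin 2 → Polynomial ℝ) (t : ℝ) (w : MvPolynomial (Fin 2) ℝ) :
    (MvPolynomial.aeval s w).eval t = MvPolynomial.eval (fun i => (s i).eval t) w := by
  have h : (Polynomial.evalRingHom t).comp
        (MvPolynomial.aeval s : MvPolynomial (Fin 2) ℝ →ₐ[ℝ] Polynomial ℝ).toRingHom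
      = (MvPolynomial.eval (fun i => (s i).eval t) : MvPolynomial (Fin 2) ℝ →+* ℝ) := by
    apply MvPolynomial.ringHom_ext
    · intro r; simp
    · intro i; simp
  exact RingHom.congr_fun h w

lemma aux_deg (s : Fin 2 → Polynomial ℝ) (hs : ∀ i, (s i).natDegree ≤ 1)
    (w : MvPolynomial (Fin 2) ℝ) :
    (MvPolynomial.aeval s w).natDegree ≤ w.totalDegree := by
  conv_lhs => rw [MvPolynomial.as_sum w, map_sum]
  apply Polynomial.natDegree_sum_le_of_forall_le
  intro d hd
  rw [MvPolynomial.aeval_monomial]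
  refine le_trans (Polynomial.natDegree_mul_le) ?_
  have h0 : (algebraMap ℝ (Polynomial ℝ) (MvPolynomial.coeff d w)).natDegree = 0 := by
    simp [Polynomial.algebraMap_eq]
  rw [h0, zero_add]
  refine le_trans ?_ (MvPolynomial.le_totalDegree hd)
  rw [Finsupp.prod]
  refine le_trans (Polynomial.natDegree_prod_le _ _) ?_
  have : ∀ i ∈ d.support, ((s i) ^ (d i)).natDegree ≤ d i := by
    intro i _
    refine le_trans (Polynomial.natDegree_pow_le) ?_
    calc d i * (s i).natDegree ≤ d i * 1 := Nat.mul_le_mul_left _ (hs i)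
    _ = d i := by ring
  refine le_trans (Finset.sum_le_sum this) ?_
  rfl

lemma hsum2 (dd : Fin 2 →₀ ℕ) : (∑ i ∈ dd.support, dd i) = dd 0 + dd 1 := by
  rw [Finset.sum_subset (Finset.subset_univ _)
    (fun i _ h => Finsupp.notMem_support_iff.mp h)]
  simp [Fin.sum_univ_two]

lemma nd3 (c : ℝ) (f h : Polynomial ℝ) :
    (Polynomial.C c * (f * h)).natDegree ≤ f.natDegree + h.natDegree := by
  refine le_trans Polynomial.natDegree_mul_le ?_
  simp only [Polynomial.natDegree_C, zero_add]
  exact Polynomial.natDegree_mul_le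

theorem stmt_9 (k : ℕ) (hk : 1 ≤ k) (g : ℤ → ℝ)
    (hzero : ∀ i ∈ (Finset.Icc (-(k : ℤ)) (k : ℤ)).erase 0,
      (legendreP (2 * k)).eval (g i) = 0)
    (hmem : ∀ i ∈ (Finset.Icc (-(k : ℤ)) (k : ℤ)).erase 0, g i ∈ Set.Ioo (-1 : ℝ) 1)
    (hne : ∀ i ∈ (Finset.Icc (-(k : ℤ)) (k : ℤ)).erase 0, g i ≠ 0)
    (hinj : Set.InjOn g ((Finset.Icc (-(k : ℤ)) (k : ℤ)).erase 0))
    (hsym : ∀ i ∈ (Finset.Icc (-(k : ℤ)) (k : ℤ)).erase 0, g (-i) = -g i)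
    (I : Finset (ℝ × ℝ))
    (hI : ∀ r ∈ I, r.1 ∈ Set.Ioo (-1 : ℝ) 1 ∧ r.2 ∈ Set.Ioo (-1 : ℝ) 1)
    (hunisolv : ∀ q : MvPolynomial (Fin 2) ℝ,
      (∀ d ∈ q.support, ((d 0 + d 1 : ℕ) : ℤ) ≤ 2 * (k : ℤ) - 4) →
      (∀ r ∈ I, MvPolynomial.eval ![r.1, r.2] q = 0) → q = 0)
    -- v ∈ R_m⁺(K̂) with m = 2k
    (v p : MvPolynomial (Fin 2) ℝ) (c₁ c₂ : ℝ)
    (hp : p.totalDegree ≤ 2 * k)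
    (hv : v = p + MvPolynomial.C c₁ * (MvPolynomial.X 0 ^ (2 * k) * MvPolynomial.X 1) +
      MvPolynomial.C c₂ * (MvPolynomial.X 0 * MvPolynomial.X 1 ^ (2 * k)))
    -- v vanishes at every point of G⁺
    (hG : ∀ i ∈ (Finset.Icc (-(k : ℤ)) (k : ℤ)).erase 0,
      MvPolynomial.eval ![1, g i] v = 0 ∧ MvPolynomial.eval ![-1, g i] v = 0 ∧
      MvPolynomial.eval ![g i, 1] v = 0 ∧ MvPolynomial.eval ![g i, -1] v = 0)
    -- v vanishes at every point of I⁺ and at (1,1)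
    (hIv : ∀ r ∈ I, MvPolynomial.eval ![r.1, r.2] v = 0)
    (hcorner : MvPolynomial.eval ![1, 1] v = 0) :
    v = 0 := by
  classical
  set S := (Finset.Icc (-(k : ℤ)) (k : ℤ)).erase 0 with hS
  have hScard : S.card = 2 * k := by
    rw [hS, Finset.card_erase_of_mem (by simp only [Finset.mem_erase, Finset.mem_Icc]; omega), Int.card_Icc]
    omega
  set T : Finset ℝ := S.image g ∪ {(1 : ℝ)} with hT
  have hTcard : T.card = 2 * k + 1 := by
    rw [hT, Finset.card_union_of_disjoint, Finset.card_image_of_injOn hinj, hScard,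
      Finset.card_singleton]
    rw [Finset.disjoint_singleton_right]
    intro hmem1
    obtain ⟨i, hi, hgi⟩ := Finset.mem_image.mp hmem1
    exact absurd hgi (ne_of_lt (hmem i hi).2)
  -- degree bounds
  have key : ∀ a : ℝ, (MvPolynomial.aeval ![Polynomial.C a, Polynomial.X] v).natDegree ≤ 2 * k := by
    intro a
    rw [hv]
    simp only [map_add, map_mul, map_pow, MvPolynomial.aeval_C, MvPolynomial.aeval_X,
      Matrix.cons_val_zero, Matrix.cons_val_one, Matrix.head_cons]
    refine le_trans (natDegree_add_le _ _) (max_le (le_trans (natDegree_add_le _ _)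
      (max_le ?_ ?_)) ?_)
    · exact le_trans (aux_deg _ (by intro i; fin_cases i <;> simp) p) hp
    · refine le_trans (nd3 _ _ _) ?_
      rw [← C_pow]
      simp only [natDegree_C, natDegree_X, zero_add]
      omega
    · refine le_trans (nd3 _ _ _) ?_
      simp [natDegree_C, natDegree_X_pow]
  have key' : ∀ a : ℝ, (MvPolynomial.aeval ![Polynomial.X, Polynomial.C a] v).natDegree ≤ 2 * k := by
    intro a
    rw [hv]
    simp only [map_add, map_mul, map_pow, MvPolynomial.aeval_C, MvPolynomial.aeval_X,
      Matrix.cons_val_zero, Matrix.cons_val_one, Matrix.head_cons]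
    refine le_trans (natDegree_add_le _ _) (max_le (le_trans (natDegree_add_le _ _)
      (max_le ?_ ?_)) ?_)
    · exact le_trans (aux_deg _ (by intro i; fin_cases i <;> simp) p) hp
    · refine le_trans (nd3 _ _ _) ?_
      simp [natDegree_X_pow, natDegree_C]
    · refine le_trans (nd3 _ _ _) ?_
      rw [← C_pow]
      simp only [natDegree_C, natDegree_X, add_zero]
      omega
  -- evaluation of the univariate restrictions
  have evalq : ∀ a t : ℝ, (MvPolynomial.aeval ![Polynomial.C a, Polynomial.X] v).eval t
      = MvPolynomial.eval ![a, t] v := by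
    intro a t
    have hfun : (fun i => (![Polynomial.C a, Polynomial.X] i).eval t) = ![a, t] := by
      funext i; fin_cases i <;> simp
    rw [aux_eval, hfun]
  have evalq' : ∀ a t : ℝ, (MvPolynomial.aeval ![Polynomial.X, Polynomial.C a] v).eval t
      = MvPolynomial.eval ![t, a] v := by
    intro a t
    have hfun : (fun i => (![Polynomial.X, Polynomial.C a] i).eval t) = ![t, a] := by
      funext i; fin_cases i <;> simp
    rw [aux_eval, hfun]
  -- the four edge restrictions vanish
  have hq1 : MvPolynomial.aeval ![Polynomial.C (1:ℝ), Polynomial.X] v = 0 := by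
    apply Polynomial.eq_zero_of_natDegree_lt_card_of_eval_eq_zero' _ T
    · intro t ht
      rw [evalq]
      rcases Finset.mem_union.mp ht with h | h
      · obtain ⟨i, hi, rfl⟩ := Finset.mem_image.mp h
        exact (hG i hi).1
      · rw [Finset.mem_singleton] at h; subst h; exact hcorner
    · rw [hTcard]; exact lt_of_le_of_lt (key 1) (by omega)
  have hq2 : MvPolynomial.aeval ![Polynomial.X, Polynomial.C (1:ℝ)] v = 0 := by
    apply Polynomial.eq_zero_of_natDegree_lt_card_of_eval_eq_zero' _ T
    · intro t ht
      rw [evalq']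
      rcases Finset.mem_union.mp ht with h | h
      · obtain ⟨i, hi, rfl⟩ := Finset.mem_image.mp h
        exact (hG i hi).2.2.1
      · rw [Finset.mem_singleton] at h; subst h; exact hcorner
    · rw [hTcard]; exact lt_of_le_of_lt (key' 1) (by omega)
  have hc2 : MvPolynomial.eval ![(-1:ℝ), 1] v = 0 := by
    rw [← evalq' 1 (-1), hq2]; simp
  have hc1 : MvPolynomial.eval ![(1:ℝ), -1] v = 0 := by
    rw [← evalq 1 (-1), hq1]; simp
  have hq3 : MvPolynomial.aeval ![Polynomial.C (-1:ℝ), Polynomial.X] v = 0 := by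
    apply Polynomial.eq_zero_of_natDegree_lt_card_of_eval_eq_zero' _ T
    · intro t ht
      rw [evalq]
      rcases Finset.mem_union.mp ht with h | h
      · obtain ⟨i, hi, rfl⟩ := Finset.mem_image.mp h
        exact (hG i hi).2.1
      · rw [Finset.mem_singleton] at h; subst h; exact hc2
    · rw [hTcard]; exact lt_of_le_of_lt (key (-1)) (by omega)
  have hq4 : MvPolynomial.aeval ![Polynomial.X, Polynomial.C (-1:ℝ)] v = 0 := by
    apply Polynomial.eq_zero_of_natDegree_lt_card_of_eval_eq_zero' _ T
    · intro t ht
      rw [evalq']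
      rcases Finset.mem_union.mp ht with h | h
      · obtain ⟨i, hi, rfl⟩ := Finset.mem_image.mp h
        exact (hG i hi).2.2.2
      · rw [Finset.mem_singleton] at h; subst h; exact hc1
    · rw [hTcard]; exact lt_of_le_of_lt (key' (-1)) (by omega)
  -- factor out (x²-1)(y²-1)
  have hV1 : (Phi v).eval (Polynomial.C 1) = 0 := by rw [aux_evalC]; exact hq1
  have hV2 : (Phi v).eval (Polynomial.C (-1)) = 0 := by rw [aux_evalC]; exact hq3
  obtain ⟨W, hW⟩ := div2 (a := Polynomial.C (1:ℝ)) (b := Polynomial.C (-1:ℝ))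
    (by intro h; have := Polynomial.C_injective h; norm_num at this) hV1 hV2
  have hmap1 : W.map (Polynomial.evalRingHom (1:ℝ)) = 0 := by
    have h0 : (Phi v).map (Polynomial.evalRingHom (1:ℝ)) = 0 := by
      rw [aux_map]; exact hq2
    rw [hW, Polynomial.map_mul] at h0
    refine (mul_eq_zero.mp h0).resolve_left ?_
    simp only [Polynomial.map_mul, Polynomial.map_sub, Polynomial.map_X, Polynomial.map_C]
    exact mul_ne_zero (X_sub_C_ne_zero _) (X_sub_C_ne_zero _)
  have hmap2 : W.map (Polynomial.evalRingHom (-1:ℝ)) = 0 := by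
    have h0 : (Phi v).map (Polynomial.evalRingHom (-1:ℝ)) = 0 := by
      rw [aux_map]; exact hq4
    rw [hW, Polynomial.map_mul] at h0
    refine (mul_eq_zero.mp h0).resolve_left ?_
    simp only [Polynomial.map_mul, Polynomial.map_sub, Polynomial.map_X, Polynomial.map_C]
    exact mul_ne_zero (X_sub_C_ne_zero _) (X_sub_C_ne_zero _)
  have hcoef : ∀ n, ((X : Polynomial ℝ) - C 1) * (X - C (-1)) ∣ W.coeff n := by
    intro n
    refine div2 (by norm_num) ?_ ?_
    · have h := congrArg (fun q => Polynomial.coeff q n) hmap1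
      simpa [Polynomial.coeff_map] using h
    · have h := congrArg (fun q => Polynomial.coeff q n) hmap2
      simpa [Polynomial.coeff_map] using h
  obtain ⟨U, hU⟩ := (Polynomial.C_dvd_iff_dvd_coeff _ _).mpr hcoef
  set u : MvPolynomial (Fin 2) ℝ := BB U with hu
  have hfact : v = (MvPolynomial.X 0 ^ 2 - 1) * (MvPolynomial.X 1 ^ 2 - 1) * u := by
    have h1 : v = BB (Phi v) := (aux_comp v).symm
    rw [hW, hU] at h1
    rw [h1]
    simp only [map_mul, map_sub, map_one, BB_X, BB_C, Polynomial.eval₂_mul,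
      Polynomial.eval₂_sub, Polynomial.eval₂_X, Polynomial.eval₂_C, Polynomial.eval₂_one,
      map_neg]
    ring
  -- u vanishes on I
  have hevalu : ∀ a b : ℝ, MvPolynomial.eval ![a, b] v
      = (a ^ 2 - 1) * ((b ^ 2 - 1) * MvPolynomial.eval ![a, b] u) := by
    intro a b
    rw [hfact]
    simp only [map_mul, map_sub, map_one, map_pow, MvPolynomial.eval_X,
      Matrix.cons_val_zero, Matrix.cons_val_one, Matrix.head_cons]
    ring
  have hIvu : ∀ r ∈ I, MvPolynomial.eval ![r.1, r.2] u = 0 := by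
    intro r hr
    have h0 := hIv r hr
    rw [hevalu] at h0
    obtain ⟨h1, h2⟩ := hI r hr
    have ha : r.1 ^ 2 - 1 ≠ 0 := by nlinarith [h1.1, h1.2]
    have hb : r.2 ^ 2 - 1 ≠ 0 := by nlinarith [h2.1, h2.2]
    rcases mul_eq_zero.mp h0 with h | h
    · exact absurd h ha
    · rcases mul_eq_zero.mp h with h' | h'
      · exact absurd h' hb
      · exact h'
  -- degree bound on u
  by_cases hu0 : u = 0
  · rw [hfact, hu0, mul_zero]
  have hdeg : ∀ d ∈ u.support, ((d 0 + d 1 : ℕ) : ℤ) ≤ 2 * (k : ℤ) - 4 := by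
    set e0 : Fin 2 →₀ ℕ := Finsupp.single 0 2 with he0
    set e1 : Fin 2 →₀ ℕ := Finsupp.single 1 2 with he1
    have hw : v = MvPolynomial.monomial (e0 + e1) (1:ℝ) * u
        - MvPolynomial.monomial e0 (1:ℝ) * u - MvPolynomial.monomial e1 (1:ℝ) * u + u := by
      rw [hfact, MvPolynomial.X_pow_eq_monomial, MvPolynomial.X_pow_eq_monomial,
        ← he0, ← he1,
        show (MvPolynomial.monomial (e0 + e1) (1:ℝ))
            = MvPolynomial.monomial e0 1 * MvPolynomial.monomial e1 1 by
          rw [MvPolynomial.monomial_mul, mul_one]]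
      ring
    obtain ⟨d, hd, hdD⟩ : ∃ d ∈ u.support, u.totalDegree = (d.sum fun _ e => e) := by
      rw [MvPolynomial.totalDegree]
      exact Finset.exists_mem_eq_sup _ (MvPolynomial.support_nonempty.mpr hu0) _
    set D := u.totalDegree with hD
    have hdsum : d 0 + d 1 = D := by rw [hdD]; exact (hsum2 d).symm
    have hDle : (D : ℤ) ≤ 2 * (k : ℤ) - 4 := by
      by_contra hcon
      have h4 : 2 * k + 1 ≤ D + 4 := by omega
      have hzero1 : MvPolynomial.coeff (e1 + d) u = 0 := by
        apply MvPolynomial.coeff_eq_zero_of_totalDegree_lt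
        rw [hsum2]
        simp only [Finsupp.add_apply, he1, Finsupp.single_apply]
        simp only [show ((1:Fin 2) = 0) = False by simp, show ((1:Fin 2) = 1) = True by simp,
          if_true, if_false]
        omega
      have hzero2 : MvPolynomial.coeff (e0 + d) u = 0 := by
        apply MvPolynomial.coeff_eq_zero_of_totalDegree_lt
        rw [hsum2]
        simp only [Finsupp.add_apply, he0, Finsupp.single_apply]
        simp only [show ((0:Fin 2) = 0) = True by simp, show ((0:Fin 2) = 1) = False by simp,
          if_true, if_false]
        omega
      have hzero3 : MvPolynomial.coeff (e0 + e1 + d) u = 0 := by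
        apply MvPolynomial.coeff_eq_zero_of_totalDegree_lt
        rw [hsum2]
        simp only [Finsupp.add_apply, he0, he1, Finsupp.single_apply]
        simp only [show ((0:Fin 2) = 0) = True by simp, show ((0:Fin 2) = 1) = False by simp,
          show ((1:Fin 2) = 0) = False by simp, show ((1:Fin 2) = 1) = True by simp,
          if_true, if_false]
        omega
      have hix1 : e0 + e1 + d = e0 + (e1 + d) := by rw [add_assoc]
      have hix2 : e0 + e1 + d = e1 + (e0 + d) := by rw [add_comm e0 e1, add_assoc]
      have t1 : MvPolynomial.coeff (e0 + e1 + d) (MvPolynomial.monomial (e0 + e1) (1:ℝ) * u)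
          = MvPolynomial.coeff d u := by
        rw [MvPolynomial.coeff_monomial_mul, one_mul]
      have t2 : MvPolynomial.coeff (e0 + e1 + d) (MvPolynomial.monomial e0 (1:ℝ) * u) = 0 := by
        rw [hix1, MvPolynomial.coeff_monomial_mul, one_mul, hzero1]
      have t3 : MvPolynomial.coeff (e0 + e1 + d) (MvPolynomial.monomial e1 (1:ℝ) * u) = 0 := by
        rw [hix2, MvPolynomial.coeff_monomial_mul, one_mul, hzero2]
      have hside1 : MvPolynomial.coeff (e0 + e1 + d) v = MvPolynomial.coeff d u := by
        rw [hw]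
        simp only [MvPolynomial.coeff_add, MvPolynomial.coeff_sub, t1, t2, t3, hzero3]
        ring
      have i0 : (e0 + e1 + d) 0 = 2 + d 0 := by
        simp [he0, he1, Finsupp.add_apply, Finsupp.single_apply]
      have i1 : (e0 + e1 + d) 1 = 2 + d 1 := by
        simp [he0, he1, Finsupp.add_apply, Finsupp.single_apply]
      have hside2 : MvPolynomial.coeff (e0 + e1 + d) v = 0 := by
        rw [hv]
        have hp0 : MvPolynomial.coeff (e0 + e1 + d) p = 0 := by
          apply MvPolynomial.coeff_eq_zero_of_totalDegree_lt
          rw [hsum2, i0, i1]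
          omega
        have hm1 : MvPolynomial.coeff (e0 + e1 + d)
            (MvPolynomial.X (0 : Fin 2) ^ (2 * k) * MvPolynomial.X 1 : MvPolynomial (Fin 2) ℝ)
            = 0 := by
          rw [show (MvPolynomial.X (1 : Fin 2) : MvPolynomial (Fin 2) ℝ)
              = MvPolynomial.X 1 ^ 1 from (pow_one _).symm,
            MvPolynomial.X_pow_eq_monomial, MvPolynomial.X_pow_eq_monomial,
            MvPolynomial.monomial_mul, mul_one, MvPolynomial.coeff_monomial, if_neg]
          intro h
          have h1 := DFunLike.congr_fun h 1
          simp only [Finsupp.add_apply, Finsupp.single_apply, i1] at h1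
          simp only [show ((0:Fin 2) = 1) = False by simp, show ((1:Fin 2) = 1) = True by simp,
            if_true, if_false] at h1
          omega
        have hm2 : MvPolynomial.coeff (e0 + e1 + d)
            (MvPolynomial.X (0 : Fin 2) * MvPolynomial.X 1 ^ (2 * k) : MvPolynomial (Fin 2) ℝ)
            = 0 := by
          rw [show (MvPolynomial.X (0 : Fin 2) : MvPolynomial (Fin 2) ℝ)
              = MvPolynomial.X 0 ^ 1 from (pow_one _).symm,
            MvPolynomial.X_pow_eq_monomial, MvPolynomial.X_pow_eq_monomial,
            MvPolynomial.monomial_mul, mul_one, MvPolynomial.coeff_monomial, if_neg]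
          intro h
          have h1 := DFunLike.congr_fun h 0
          simp only [Finsupp.add_apply, Finsupp.single_apply, i0] at h1
          simp only [show ((0:Fin 2) = 0) = True by simp, show ((1:Fin 2) = 0) = False by simp,
            if_true, if_false] at h1
          omega
        simp only [MvPolynomial.coeff_add, MvPolynomial.coeff_C_mul, hp0, hm1, hm2]
        ring
      have hcd : MvPolynomial.coeff d u = 0 := by rw [← hside1]; exact hside2
      exact (MvPolynomial.mem_support_iff.mp hd) hcd
    intro d' hd'
    have hle := MvPolynomial.le_totalDegree hd'
    have h2 : d' 0 + d' 1 ≤ D := by rw [← hsum2]; exact hle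
    omega
  have hu := hunisolv u hdeg hIvu
  exact absurd hu hu0
end
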